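/- Let (S, 𝒮, μ) be a measure space. For any f, g ∈ L¹(μ) and any sequence t_n ↓ 0, the one-sided directional derivative of the L¹ norm satisfies: lim_{n→∞} (‖f + t_n g‖_{L¹(μ)} − ‖f‖_{L¹(μ)})/t_n = ∫ sign(f) · g dμ + ∫_{{f = 0}} |g| dμ, where sign(t) = 1 if t > 0, 0 if t = 0, and −1 if t < 0. -/
import Mathlib

open Filter Topology MeasureTheory

lemma measurable_real_sign : Measurable Real.sign := by
  have : Real.sign = fun r : ℝ => if r < 0 then (-1:ℝ) else if 0 < r then 1 else 0 := by
    funext r; rfl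
  rw [this]
  exact Measurable.ite measurableSet_Iio measurable_const
    (Measurable.ite measurableSet_Ioi measurable_const measurable_const)

/-- One-sided directional derivative of the L¹ norm: for integrable f, g and
a sequence tₙ ↓ 0,  (‖f + tₙ g‖₁ − ‖f‖₁)/tₙ → ∫ sign(f)·g dμ + ∫_{f=0} |g| dμ. -/
theorem stmt1 {S : Type*} [MeasurableSpace S] (μ : Measure S)
    (f g : S → ℝ) (hf : Integrable f μ) (hg : Integrable g μ)
    (t : ℕ → ℝ) (ht : ∀ n, 0 < t n) (ht0 : Tendsto t atTop (𝓝 0)) :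
    Tendsto (fun n => ((∫ x, |f x + t n * g x| ∂μ) - ∫ x, |f x| ∂μ) / t n) atTop
      (𝓝 ((∫ x, Real.sign (f x) * g x ∂μ) + ∫ x in {x | f x = 0}, |g x| ∂μ)) := by
  set f' : S → ℝ := hf.1.mk f with hf'def
  have hff' : f =ᵐ[μ] f' := hf.1.ae_eq_mk
  have hf'm : Measurable f' := hf.1.measurable_mk
  have hf' : Integrable f' μ := hf.congr hff'
  have hmeas : MeasurableSet {x | f' x = 0} := hf'm (measurableSet_singleton 0)
  set φ : S → ℝ := fun x =>
    Real.sign (f' x) * g x + Set.indicator {x | f' x = 0} (fun x => |g x|) x with hφ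
  set F : ℕ → S → ℝ := fun n x => (|f' x + t n * g x| - |f' x|) / t n with hF
  have hFmeas : ∀ n, AEStronglyMeasurable (F n) μ := by
    intro n
    exact (((continuous_abs.comp_aestronglyMeasurable (hf'.1.add (hg.1.const_mul _))).sub
      (continuous_abs.comp_aestronglyMeasurable hf'.1)).mul_const ((t _)⁻¹))
  have hbound : ∀ n, ∀ᵐ x ∂μ, ‖F n x‖ ≤ |g x| := by
    intro n
    refine Filter.Eventually.of_forall fun x => ?_
    have h1 : |(|f' x + t n * g x| - |f' x|)| ≤ |t n * g x| := by
      have := abs_abs_sub_abs_le_abs_sub (f' x + t n * g x) (f' x)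
      simpa using this
    have h2 : |t n * g x| = t n * |g x| := by
      rw [abs_mul, abs_of_pos (ht n)]
    rw [Real.norm_eq_abs, hF]
    simp only [abs_div, abs_of_pos (ht n)]
    rw [div_le_iff₀ (ht n)]
    calc |(|f' x + t n * g x| - |f' x|)| ≤ t n * |g x| := by rw [← h2]; exact h1
      _ = |g x| * t n := by ring
  have hlim : ∀ᵐ x ∂μ, Tendsto (fun n => F n x) atTop (𝓝 (φ x)) := by
    refine Filter.Eventually.of_forall fun x => ?_
    by_cases hx : f' x = 0
    · have heq : ∀ n, F n x = |g x| := by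
        intro n
        simp only [hF, hx, zero_add, abs_zero, sub_zero, abs_mul, abs_of_pos (ht n)]
        exact mul_div_cancel_left₀ _ (ht n).ne'
      have hφx : φ x = |g x| := by
        simp [hφ, hx, Set.indicator_of_mem (by simpa using hx : x ∈ {x | f' x = 0})]
      rw [hφx]
      simp only [heq]
      exact tendsto_const_nhds
    · have htg : Tendsto (fun n => t n * g x) atTop (𝓝 0) := by
        simpa using ht0.mul_const (g x)
      have hev : ∀ᶠ n in atTop, |t n * g x - 0| < |f' x| :=
        htg.eventually (eventually_abs_sub_lt 0 (abs_pos.mpr hx))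
      have heq : ∀ᶠ n in atTop, F n x = Real.sign (f' x) * g x := by
        filter_upwards [hev] with n hn
        rw [sub_zero] at hn
        rcases lt_trichotomy (f' x) 0 with hneg | hzero | hpos
        · have h1 : f' x + t n * g x < 0 := by
            have := neg_abs_le (t n * g x)
            nlinarith [abs_lt.mp hn, abs_of_neg hneg]
          rw [hF]
          simp only [abs_of_neg h1, abs_of_neg hneg, Real.sign_of_neg hneg]
          field_simp [(ht n).ne']
          ring
        · exact absurd hzero hx
        · have h1 : 0 < f' x + t n * g x := by
            nlinarith [abs_lt.mp hn, abs_of_pos hpos]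
          rw [hF]
          simp only [abs_of_pos h1, abs_of_pos hpos, Real.sign_of_pos hpos]
          rw [add_sub_cancel_left, one_mul]
          exact mul_div_cancel_left₀ _ (ht n).ne'
      have hφx : φ x = Real.sign (f' x) * g x := by
        simp [hφ, Set.indicator_of_notMem (by simpa using hx : x ∉ {x | f' x = 0})]
      rw [hφx]
      exact Tendsto.congr' (heq.mono fun n h => h.symm) tendsto_const_nhds
  have key : Tendsto (fun n => ∫ x, F n x ∂μ) atTop (𝓝 (∫ x, φ x ∂μ)) :=
    tendsto_integral_of_dominated_convergence (fun x => |g x|) hFmeas hg.abs hbound hlim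
  -- rewrite ∫ F n
  have h1 : ∀ n, ∫ x, F n x ∂μ
      = ((∫ x, |f x + t n * g x| ∂μ) - ∫ x, |f x| ∂μ) / t n := by
    intro n
    have hint1 : Integrable (fun a => |f' a + t n * g a|) μ :=
      (hf'.add (hg.const_mul (t n))).abs
    rw [hF]
    rw [integral_div, integral_sub hint1 hf'.abs]
    congr 2
    · exact integral_congr_ae (by filter_upwards [hff'] with x hx; rw [hx])
    · exact integral_congr_ae (by filter_upwards [hff'] with x hx; rw [hx])
  -- sign integrable
  have hsign_int : Integrable (fun x => Real.sign (f' x) * g x) μ := by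
    refine hg.abs.mono' ((measurable_real_sign.comp hf'm).aestronglyMeasurable.mul hg.1) ?_
    refine Filter.Eventually.of_forall fun x => ?_
    rw [Real.norm_eq_abs, abs_mul]
    have hs : |Real.sign (f' x)| ≤ 1 := by
      rcases lt_trichotomy (f' x) 0 with h | h | h <;>
        simp [Real.sign_of_neg, Real.sign_of_pos, h]
    calc |Real.sign (f' x)| * |g x| ≤ 1 * |g x| := by
          exact mul_le_mul_of_nonneg_right hs (abs_nonneg _)
      _ = |g x| := one_mul _
  have h2 : ∫ x, φ x ∂μ
      = (∫ x, Real.sign (f x) * g x ∂μ) + ∫ x in {x | f x = 0}, |g x| ∂μ := by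
    rw [hφ, integral_add hsign_int (hg.abs.indicator hmeas), integral_indicator hmeas]
    congr 1
    · exact integral_congr_ae (by filter_upwards [hff'] with x hx; rw [hx])
    · have hset : {x | f x = 0} =ᵐ[μ] {x | f' x = 0} := by
        filter_upwards [hff'] with x hx
        show (f x = 0) = (f' x = 0)
        rw [hx]
      rw [Measure.restrict_congr_set hset]
  rw [← h2]
  exact key.congr h1
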